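/- Let (X, μ) and (Y, ν) be finite measure spaces, let f : X → ℝ and g : Y → ℝ be measurable, and let A, B > 0 and 0 < δ < δ′ < 1. Suppose that for all real λ ≠ 0, |∫_X e^{iλ f(x)} dμ(x)| ≤ A |λ|^{-δ} and |∫_Y e^{iλ g(y)} dν(y)| ≤ B |λ|^{-δ′}. Then there is a constant C, depending only on δ and δ′, such that for all real λ ≠ 0, |∫_{X×Y} e^{iλ f(x) g(y)} dμ(x) dν(y)| ≤ C · A · (ν(Y) + B) · |λ|^{-δ}. -/

import Mathlib

open MeasureTheory

lemma norm_cexp_I_mul (lam r : ℝ) : ‖Complex.exp (Complex.I * lam * r)‖ = 1 := by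
  rw [show (Complex.I * lam * r : ℂ) = ((lam * r : ℝ) : ℂ) * Complex.I by push_cast; ring]
  exact_mod_cast Complex.norm_exp_ofReal_mul_I (lam * r)


lemma fejer_eval {T : ℝ} (hT : 0 < T) {s : ℝ} (hs : s ≠ 0) :
    (∫ l in (0:ℝ)..T, (1 - l / T) * Real.cos (l * s)) =
      (1 - Real.cos (T * s)) / (T * s ^ 2) := by
  have key : ∀ l : ℝ, HasDerivAt (fun l : ℝ => (1 - l / T) * Real.sin (l * s) / s
      - Real.cos (l * s) / (T * s ^ 2)) ((1 - l / T) * Real.cos (l * s)) l := by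
    intro l
    have h1 : HasDerivAt (fun l : ℝ => 1 - l / T) (-(1 / T)) l := by
      simpa using ((hasDerivAt_id l).div_const T).const_sub 1
    have hls : HasDerivAt (fun l : ℝ => l * s) s l := by
      simpa using (hasDerivAt_id l).mul_const s
    have h2 : HasDerivAt (fun l : ℝ => Real.sin (l * s)) (Real.cos (l * s) * s) l := hls.sin
    have h3 : HasDerivAt (fun l : ℝ => Real.cos (l * s)) (-Real.sin (l * s) * s) l := hls.cos
    have := ((h1.mul h2).div_const s).sub (h3.div_const (T * s ^ 2))
    refine this.congr_deriv ?_
    field_simp [hT.ne']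
    ring
  rw [intervalIntegral.integral_eq_sub_of_hasDerivAt (fun l _ => key l)
    (((continuous_const.sub (continuous_id.div_const T)).mul
      (Real.continuous_cos.comp (continuous_id.mul continuous_const))).intervalIntegrable _ _)]
  have hT' : T ≠ 0 := hT.ne'
  field_simp
  simp only [mul_zero, Real.sin_zero, Real.cos_zero]; ring

lemma fejer_zero {T : ℝ} (hT : 0 < T) :
    (∫ l in (0:ℝ)..T, (1 - l / T) * Real.cos (l * 0)) = T / 2 := by
  simp only [mul_zero, Real.cos_zero, mul_one]
  rw [intervalIntegral.integral_sub intervalIntegrable_const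
    ((intervalIntegral.intervalIntegrable_id).div_const T)]
  rw [intervalIntegral.integral_div, integral_id]
  simp
  field_simp
  ring

lemma fejer_nonneg {T : ℝ} (hT : 0 < T) (s : ℝ) :
    0 ≤ (∫ l in (0:ℝ)..T, (1 - l / T) * Real.cos (l * s)) := by
  rcases eq_or_ne s 0 with rfl | hs
  · rw [fejer_zero hT]; positivity
  · rw [fejer_eval hT hs]
    have := Real.cos_le_one (T * s)
    have h2 : (0:ℝ) < T * s ^ 2 := by positivity
    apply div_nonneg (by linarith) h2.le

lemma fejer_pos {T : ℝ} (hT : 0 < T) {s : ℝ} (hst : |s| * T ≤ 1) :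
    T / 5 ≤ (∫ l in (0:ℝ)..T, (1 - l / T) * Real.cos (l * s)) := by
  rcases eq_or_ne s 0 with rfl | hs
  · rw [fejer_zero hT]; linarith
  · rw [fejer_eval hT hs]
    have hu : |T * s| ≤ 1 := by
      rw [abs_mul, abs_of_pos hT, mul_comm]
      simpa [abs_mul, abs_of_pos hT] using hst
    have hπ3 : (3:ℝ) < Real.pi := Real.pi_gt_three
    have hπ : Real.pi < 3.15 := by
      have := Real.pi_lt_d2
      linarith
    have h2 : Real.cos (T * s) ≤ 1 - 2 / Real.pi ^ 2 * (T * s) ^ 2 :=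
      Real.cos_le_one_sub_mul_cos_sq (by nlinarith [abs_nonneg (T*s)])
    have h5 : (1:ℝ)/5 ≤ 2 / Real.pi ^ 2 := by
      rw [div_le_div_iff₀ (by norm_num) (by positivity)]
      nlinarith
    have h6 : (T*s)^2 / 5 ≤ 2 / Real.pi ^ 2 * (T*s)^2 := by
      nlinarith [sq_nonneg (T*s)]
    rw [le_div_iff₀ (by positivity : (0:ℝ) < T * s ^ 2)]
    nlinarith [sq_nonneg (T*s), sq_nonneg s]

lemma dist_bound {Y : Type} [MeasurableSpace Y] (ν : Measure Y) [hν : IsFiniteMeasure ν]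
    {g : Y → ℝ} (hg : Measurable g) {B δ' : ℝ} (hB : 0 < B) (hδ'0 : 0 < δ') (hδ'1 : δ' < 1)
    (hyp : ∀ lam : ℝ, lam ≠ 0 →
      ‖∫ y, Complex.exp (Complex.I * (lam : ℂ) * (g y : ℂ)) ∂ν‖ ≤ B * |lam| ^ (-δ'))
    {t : ℝ} (ht : 0 < t) :
    (ν {y | |g y| ≤ t}).toReal ≤ 5 / (1 - δ') * B * t ^ δ' := by
  set T : ℝ := t⁻¹ with hTdef
  have hT : 0 < T := inv_pos.2 ht
  have hT0 : T ≠ 0 := hT.ne'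
  have h1δ : (0:ℝ) < 1 - δ' := by linarith
  set ρ : Measure ℝ := volume.restrict (Set.Ioc (0:ℝ) T) with hρ
  haveI : IsFiniteMeasure ρ := ⟨by
    rw [Measure.restrict_apply_univ]
    simp [Real.volume_Ioc]⟩
  set F : ℝ × Y → ℝ := fun p => (1 - p.1 / T) * Real.cos (p.1 * g p.2) with hF
  have hFmeas : Measurable F :=
    (measurable_const.sub (measurable_fst.div_const T)).mul
      (Real.measurable_cos.comp (measurable_fst.mul (hg.comp measurable_snd)))
  have hae : ∀ᵐ p ∂(ρ.prod ν), p.1 ∈ Set.Ioc (0:ℝ) T := by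
    rw [ae_iff]
    have hset : {p : ℝ × Y | ¬ p.1 ∈ Set.Ioc (0:ℝ) T} = (Set.Ioc (0:ℝ) T)ᶜ ×ˢ Set.univ := by
      ext p; simp
    rw [hset, Measure.prod_prod, hρ, Measure.restrict_apply measurableSet_Ioc.compl]
    simp
  have hFint : Integrable F (ρ.prod ν) := by
    refine Integrable.mono' (integrable_const 1) hFmeas.aestronglyMeasurable ?_
    refine hae.mono fun p hp => ?_
    have h1 : (0:ℝ) ≤ 1 - p.1 / T := by
      rw [sub_nonneg]; exact div_le_one_of_le₀ hp.2 hT.le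
    have h2 : 1 - p.1 / T ≤ 1 := by
      have : 0 < p.1 / T := div_pos hp.1 hT
      linarith
    rw [Real.norm_eq_abs, hF, abs_mul]
    calc |1 - p.1/T| * |Real.cos (p.1 * g p.2)| ≤ 1 * 1 := by
          apply mul_le_mul _ (Real.abs_cos_le_one _) (abs_nonneg _) zero_le_one
          rw [abs_of_nonneg h1]; exact h2
      _ = 1 := one_mul 1
  have hswap : (∫ l, (∫ y, F (l, y) ∂ν) ∂ρ) = ∫ y, (∫ l, F (l, y) ∂ρ) ∂ν :=
    integral_integral_swap (f := fun l y => F (l, y)) hFint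
  have hker : ∀ y, (∫ l, F (l, y) ∂ρ) = ∫ l in (0:ℝ)..T, (1 - l / T) * Real.cos (l * g y) := by
    intro y
    rw [intervalIntegral.integral_of_le hT.le]
  set S : Set Y := {y | |g y| ≤ t} with hS
  have hSmeas : MeasurableSet S := (hg.abs) measurableSet_Iic
  have hHint : Integrable (fun y => ∫ l, F (l, y) ∂ρ) ν := hFint.integral_prod_right
  have hlow : T / 5 * (ν S).toReal ≤ ∫ y, (∫ l, F (l, y) ∂ρ) ∂ν := by
    have step1 : (∫ y in S, (T/5) ∂ν) ≤ ∫ y in S, (∫ l, F (l, y) ∂ρ) ∂ν := by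
      apply setIntegral_mono_on (integrable_const _).integrableOn hHint.integrableOn hSmeas
      intro y hy
      rw [hker y]
      apply fejer_pos hT
      have hgy : |g y| ≤ t := hy
      calc |g y| * T ≤ t * T := mul_le_mul_of_nonneg_right hgy hT.le
        _ = 1 := by rw [hTdef]; field_simp
    have step2 : (∫ y in S, (∫ l, F (l, y) ∂ρ) ∂ν) ≤ ∫ y, (∫ l, F (l, y) ∂ρ) ∂ν := by
      apply setIntegral_le_integral hHint
      apply Filter.Eventually.of_forall
      intro y
      have : (0:ℝ) ≤ ∫ l, F (l, y) ∂ρ := by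
        rw [hker y]; exact fejer_nonneg hT _
      exact this
    have e0 : (∫ y in S, (T/5) ∂ν) = T / 5 * (ν S).toReal := by
      rw [setIntegral_const, smul_eq_mul, mul_comm]; rfl
    linarith [step1, step2]
  have hup : (∫ l, (∫ y, F (l, y) ∂ν) ∂ρ) ≤ B * T ^ (1 - δ') / (1 - δ') := by
    have hmono : (∫ l, (∫ y, F (l, y) ∂ν) ∂ρ) ≤ ∫ l in Set.Ioc (0:ℝ) T, B * l ^ (-δ') := by
      apply setIntegral_mono_on
      · exact hFint.integral_prod_left
      · rw [← intervalIntegrable_iff_integrableOn_Ioc_of_le hT.le]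
        exact (intervalIntegral.intervalIntegrable_rpow' (by linarith)).const_mul B
      · exact measurableSet_Ioc
      · intro l hl
        have hl0 : 0 < l := hl.1
        have hint_exp : Integrable (fun y => Complex.exp (Complex.I * (l:ℂ) * (g y : ℂ))) ν := by
          refine Integrable.mono' (integrable_const 1)
            (Complex.measurable_exp.comp
              (measurable_const.mul (Complex.measurable_ofReal.comp hg))).aestronglyMeasurable
            (Filter.Eventually.of_forall fun y => ?_)
          rw [show (Complex.I * (l:ℂ) * (g y:ℂ)) = ((l * g y : ℝ) : ℂ) * Complex.I by
            push_cast; ring]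
          exact le_of_eq (Complex.norm_exp_ofReal_mul_I _)
        have hcos : (∫ y, Real.cos (l * g y) ∂ν) ≤ B * l ^ (-δ') := by
          have hre : (∫ y, Real.cos (l * g y) ∂ν)
              = (∫ y, Complex.exp (Complex.I * (l:ℂ) * (g y : ℂ)) ∂ν).re := by
            rw [← RCLike.re_to_complex, ← integral_re hint_exp]
            congr 1; ext y
            rw [show (Complex.I * (l:ℂ) * (g y:ℂ)) = ((l * g y : ℝ) : ℂ) * Complex.I by
              push_cast; ring]
            rw [RCLike.re_to_complex]
            exact (Complex.exp_ofReal_mul_I_re _).symm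
          rw [hre]
          calc (∫ y, Complex.exp (Complex.I * (l:ℂ) * (g y : ℂ)) ∂ν).re
              ≤ ‖∫ y, Complex.exp (Complex.I * (l:ℂ) * (g y : ℂ)) ∂ν‖ := Complex.re_le_norm _
            _ ≤ B * |l| ^ (-δ') := hyp l hl0.ne'
            _ = B * l ^ (-δ') := by rw [abs_of_pos hl0]
        have hfac0 : (0:ℝ) ≤ 1 - l / T := by
          rw [sub_nonneg]; exact div_le_one_of_le₀ hl.2 hT.le
        have hfac1 : 1 - l / T ≤ 1 := by
          have : 0 < l / T := div_pos hl0 hT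
          linarith
        have hrpos : (0:ℝ) ≤ B * l ^ (-δ') := by positivity
        have heq : (∫ y, F (l, y) ∂ν) = (1 - l / T) * ∫ y, Real.cos (l * g y) ∂ν := by
          simp only [hF]
          exact integral_const_mul _ _
        rw [heq]
        have e1 := mul_le_mul_of_nonneg_left hcos hfac0
        have e2 := mul_le_mul_of_nonneg_right hfac1 hrpos
        nlinarith [e1, e2]
    have hval : (∫ l in Set.Ioc (0:ℝ) T, B * l ^ (-δ')) = B * T ^ (1 - δ') / (1 - δ') := by
      rw [← intervalIntegral.integral_of_le hT.le, intervalIntegral.integral_const_mul,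
        integral_rpow (Or.inl (by linarith)), Real.zero_rpow (by linarith : -δ' + 1 ≠ 0),
        show -δ' + 1 = 1 - δ' by ring]
      ring
    rw [hval] at hmono
    exact hmono
  have hcomb : T / 5 * (ν S).toReal ≤ B * T ^ (1 - δ') / (1 - δ') := by
    calc T / 5 * (ν S).toReal ≤ ∫ y, (∫ l, F (l, y) ∂ρ) ∂ν := hlow
      _ = ∫ l, (∫ y, F (l, y) ∂ν) ∂ρ := hswap.symm
      _ ≤ _ := hup
  have hTrw : T ^ (1 - δ') = T * t ^ δ' := by
    rw [show (1 : ℝ) - δ' = 1 + (-δ') by ring, Real.rpow_add hT, Real.rpow_one]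
    congr 1
    rw [hTdef, ← Real.rpow_neg_one t, ← Real.rpow_mul ht.le]
    congr 1; ring
  rw [hTrw] at hcomb
  have hmul := mul_le_mul_of_nonneg_left hcomb (by positivity : (0:ℝ) ≤ 5 / T)
  calc (ν S).toReal = 5 / T * (T / 5 * (ν S).toReal) := by field_simp
    _ ≤ 5 / T * (B * (T * t ^ δ') / (1 - δ')) := hmul
    _ = 5 / (1 - δ') * B * t ^ δ' := by field_simp

/-- If `(X, μ)` and `(Y, ν)` are finite measure spaces, `f, g` are
measurable, `A, B > 0`, `0 < δ < δ' < 1`, and for all `λ ≠ 0` we have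
`|∫_X e^{iλ f} dμ| ≤ A |λ|^{-δ}` and `|∫_Y e^{iλ g} dν| ≤ B |λ|^{-δ'}`, then there is a
constant `C = C(δ, δ')` such that for all `λ ≠ 0`,
`|∫_{X×Y} e^{iλ f(x) g(y)} dμ dν| ≤ C · A · (ν(Y) + B) · |λ|^{-δ}`. -/
theorem stmt_6 (δ δ' : ℝ) (hδ0 : 0 < δ) (hδδ' : δ < δ') (hδ'1 : δ' < 1) :
    ∃ C : ℝ, 0 < C ∧
      ∀ (X Y : Type) (_ : MeasurableSpace X) (_ : MeasurableSpace Y)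
        (μ : Measure X) (ν : Measure Y), IsFiniteMeasure μ → IsFiniteMeasure ν →
      ∀ (f : X → ℝ) (g : Y → ℝ), Measurable f → Measurable g →
      ∀ (A B : ℝ), 0 < A → 0 < B →
      (∀ lam : ℝ, lam ≠ 0 →
        ‖∫ x, Complex.exp (Complex.I * (lam : ℂ) * (f x : ℂ)) ∂μ‖ ≤ A * |lam| ^ (-δ)) →
      (∀ lam : ℝ, lam ≠ 0 →
        ‖∫ y, Complex.exp (Complex.I * (lam : ℂ) * (g y : ℂ)) ∂ν‖ ≤ B * |lam| ^ (-δ')) →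
      ∀ lam : ℝ, lam ≠ 0 →
        ‖∫ z, Complex.exp (Complex.I * (lam : ℂ) * ((f z.1 * g z.2 : ℝ) : ℂ)) ∂(μ.prod ν)‖ ≤
          C * A * ((ν Set.univ).toReal + B) * |lam| ^ (-δ) := by
  have hδ'0 : 0 < δ' := lt_trans hδ0 hδδ'
  have h1δ : (0:ℝ) < 1 - δ' := by linarith
  set r : ℝ := (2:ℝ) ^ (δ - δ') with hrdef
  have hr0 : 0 < r := Real.rpow_pos_of_pos two_pos _
  have hr1 : r < 1 := Real.rpow_lt_one_of_one_lt_of_neg one_lt_two (by linarith)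
  have hr1' : (0:ℝ) < 1 - r := by linarith
  set c2 : ℝ := 5 / (1 - δ') with hc2
  have hc2pos : 0 < c2 := by positivity
  set c3 : ℝ := c2 * (2:ℝ) ^ (δ:ℝ) / (1 - r) with hc3
  have h2δpos : (0:ℝ) < (2:ℝ) ^ (δ:ℝ) := Real.rpow_pos_of_pos two_pos _
  have hc3pos : 0 < c3 := by positivity
  refine ⟨1 + c3, by positivity, ?_⟩
  intro X Y mX mY μ ν hμfin hνfin f g hf hg A B hA hB hypf hypg lam hlam
  haveI := hμfin; haveI := hνfin
  set L : ℝ := |lam| ^ (-δ) with hLdef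
  have hL : 0 ≤ L := Real.rpow_nonneg (abs_nonneg lam) _
  -- the integrand on the product space
  set Fz : X × Y → ℂ := fun z => Complex.exp (Complex.I * (lam:ℂ) * ((f z.1 * g z.2 : ℝ) : ℂ))
    with hFz
  have hFzmeas : Measurable Fz :=
    Complex.measurable_exp.comp (measurable_const.mul (Complex.measurable_ofReal.comp
      ((hf.comp measurable_fst).mul (hg.comp measurable_snd))))
  have hFzint : Integrable Fz (μ.prod ν) :=
    Integrable.mono' (integrable_const 1) hFzmeas.aestronglyMeasurable
      (Filter.Eventually.of_forall fun z => le_of_eq (norm_cexp_I_mul lam _))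
  set ψ : Y → ℂ := fun y => ∫ x, Complex.exp (Complex.I * (lam:ℂ) * ((f x * g y : ℝ) : ℂ)) ∂μ
    with hψ
  -- Fubini
  have hfub : (∫ z, Fz z ∂(μ.prod ν)) = ∫ y, ψ y ∂ν := by
    rw [integral_prod _ hFzint]
    have h2 : Integrable (Function.uncurry fun x y => Fz (x, y)) (μ.prod ν) := by
      exact hFzint
    exact integral_integral_swap h2
  -- measurability and integrability of ψ
  have hGm : StronglyMeasurable
      (fun q : Y × X => Complex.exp (Complex.I * (lam:ℂ) * ((f q.2 * g q.1 : ℝ) : ℂ))) :=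
    (Complex.measurable_exp.comp (measurable_const.mul (Complex.measurable_ofReal.comp
      ((hf.comp measurable_snd).mul (hg.comp measurable_fst))))).stronglyMeasurable
  have hψm : StronglyMeasurable ψ := hGm.integral_prod_right'
  have hψnorm : ∀ y, ‖ψ y‖ ≤ (μ Set.univ).toReal := by
    intro y
    have := norm_integral_le_of_norm_le_const (μ := μ) (C := 1)
      (Filter.Eventually.of_forall fun x =>
        le_of_eq (norm_cexp_I_mul lam (f x * g y)))
    simpa only [one_mul, Measure.real] using this
  have hψint : Integrable ψ ν :=
    Integrable.mono' (integrable_const _) hψm.aestronglyMeasurable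
      (Filter.Eventually.of_forall hψnorm)
  have hφint : Integrable (fun y => ‖ψ y‖) ν := hψint.norm
  -- pointwise bound where g y ≠ 0
  have hbound : ∀ y, g y ≠ 0 → ‖ψ y‖ ≤ A * L * |g y| ^ (-δ) := by
    intro y hgy
    have h := hypf (lam * g y) (mul_ne_zero hlam hgy)
    have heq : (∫ x, Complex.exp (Complex.I * ((lam * g y : ℝ):ℂ) * ((f x : ℝ):ℂ)) ∂μ)
        = ψ y := by
      congr 1; funext x; congr 1; push_cast; ring
    rw [heq] at h
    rw [abs_mul, Real.mul_rpow (abs_nonneg _) (abs_nonneg _)] at h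
    calc ‖ψ y‖ ≤ A * (|lam| ^ (-δ) * |g y| ^ (-δ)) := h
      _ = A * L * |g y| ^ (-δ) := by rw [hLdef]; ring
  -- the sets
  set S0 : Set Y := {y | g y = 0} with hS0def
  set S1 : Set Y := {y | 1 ≤ |g y|} with hS1def
  set E : ℕ → Set Y := fun k => {y | (2:ℝ)⁻¹ ^ (k+1) ≤ |g y| ∧ |g y| < (2:ℝ)⁻¹ ^ k} with hEdef
  set U : Set Y := ⋃ k, E k with hUdef
  have hS0m : MeasurableSet S0 := hg (measurableSet_singleton 0)
  have hS1m : MeasurableSet S1 := hg.abs measurableSet_Ici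
  have hEm : ∀ k, MeasurableSet (E k) := fun k => hg.abs measurableSet_Ico
  have hUm : MeasurableSet U := MeasurableSet.iUnion hEm
  have hpow_pos : ∀ n : ℕ, (0:ℝ) < (2:ℝ)⁻¹ ^ n := fun n => by positivity
  have hpow_le_one : ∀ n : ℕ, ((2:ℝ)⁻¹) ^ n ≤ 1 := fun n =>
    pow_le_one₀ (by norm_num) (by norm_num)
  have hcover : (Set.univ : Set Y) = S0 ∪ (S1 ∪ U) := by
    ext y
    constructor
    · intro _
      by_cases h0 : g y = 0
      · exact Or.inl h0
      by_cases h1 : 1 ≤ |g y|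
      · exact Or.inr (Or.inl h1)
      push_neg at h1
      have hpos : 0 < |g y| := abs_pos.2 h0
      obtain ⟨n, hn⟩ := exists_pow_lt_of_lt_one hpos (by norm_num : (2:ℝ)⁻¹ < 1)
      have hex : ∃ m : ℕ, ((2:ℝ)⁻¹) ^ m ≤ |g y| := ⟨n, hn.le⟩
      classical
      have hm0p : ((2:ℝ)⁻¹) ^ (Nat.find hex) ≤ |g y| := Nat.find_spec hex
      have hm0ne : Nat.find hex ≠ 0 := by
        intro hz; rw [hz, pow_zero] at hm0p; linarith
      obtain ⟨k, hk⟩ : ∃ k, Nat.find hex = k + 1 :=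
        ⟨Nat.find hex - 1, (Nat.succ_pred_eq_of_pos (Nat.pos_of_ne_zero hm0ne)).symm⟩
      have h2 : |g y| < ((2:ℝ)⁻¹) ^ k := by
        have := Nat.find_min hex (m := k) (by omega)
        push_neg at this; exact this
      have h3 : ((2:ℝ)⁻¹) ^ (k+1) ≤ |g y| := by rw [← hk]; exact hm0p
      exact Or.inr (Or.inr (Set.mem_iUnion.2 ⟨k, h3, h2⟩))
    · intro _; trivial
  have hd01 : Disjoint S0 (S1 ∪ U) := by
    rw [Set.disjoint_left]
    intro y hy0 hy1
    have hgy0 : g y = 0 := hy0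
    have habs : |g y| = 0 := by rw [hgy0, abs_zero]
    rcases hy1 with h | h
    · have h1 : (1:ℝ) ≤ |g y| := h
      linarith
    · obtain ⟨k, hk⟩ := Set.mem_iUnion.1 h
      have h1 : ((2:ℝ)⁻¹) ^ (k+1) ≤ |g y| := hk.1
      linarith [hpow_pos (k+1)]
  have hd1U : Disjoint S1 U := by
    rw [Set.disjoint_left]
    intro y hy1 hyU
    obtain ⟨k, hk⟩ := Set.mem_iUnion.1 hyU
    have h1 : 1 ≤ |g y| := hy1
    have h2 : |g y| < (2:ℝ)⁻¹ ^ k := hk.2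
    linarith [hpow_le_one k]
  have hdE : Pairwise (Function.onFun Disjoint E) := by
    intro j k hjk
    rw [Function.onFun, Set.disjoint_left]
    intro y hyj hyk
    rcases lt_or_gt_of_ne hjk with h | h
    · have hle : ((2:ℝ)⁻¹) ^ k ≤ ((2:ℝ)⁻¹) ^ (j+1) :=
        pow_le_pow_of_le_one (by norm_num) (by norm_num) (by omega)
      linarith [hyj.1, hyk.2]
    · have hle : ((2:ℝ)⁻¹) ^ j ≤ ((2:ℝ)⁻¹) ^ (k+1) :=
        pow_le_pow_of_le_one (by norm_num) (by norm_num) (by omega)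
      linarith [hyk.1, hyj.2]
  -- ν S0 = 0
  have hS0null : ν S0 = 0 := by
    have key : ∀ t : ℝ, 0 < t → (ν S0).toReal ≤ c2 * B * t ^ δ' := by
      intro t ht
      have hsub : S0 ⊆ {y | |g y| ≤ t} := by
        intro y hy
        have : g y = 0 := hy
        simp only [Set.mem_setOf_eq, this, abs_zero]
        exact ht.le
      have h1 : (ν S0).toReal ≤ (ν {y | |g y| ≤ t}).toReal :=
        ENNReal.toReal_mono (measure_ne_top ν _) (measure_mono hsub)
      have h2 := dist_bound ν hg hB hδ'0 hδ'1 hypg ht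
      calc (ν S0).toReal ≤ (ν {y | |g y| ≤ t}).toReal := h1
        _ ≤ 5 / (1 - δ') * B * t ^ δ' := h2
        _ = c2 * B * t ^ δ' := by rw [hc2]
    have hzero : (ν S0).toReal = 0 := by
      by_contra hne
      have hpos : 0 < (ν S0).toReal := lt_of_le_of_ne ENNReal.toReal_nonneg (Ne.symm hne)
      set x := (ν S0).toReal with hx
      set t : ℝ := (x / (2 * c2 * B)) ^ (δ'⁻¹ : ℝ) with htdef
      have hxpos : 0 < x / (2 * c2 * B) := by positivity
      have ht : 0 < t := Real.rpow_pos_of_pos hxpos _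
      have htp : t ^ δ' = x / (2 * c2 * B) := by
        rw [htdef, ← Real.rpow_mul hxpos.le, inv_mul_cancel₀ hδ'0.ne', Real.rpow_one]
      have := key t ht
      rw [htp] at this
      have : x ≤ x / 2 := by
        calc x ≤ c2 * B * (x / (2 * c2 * B)) := this
          _ = x / 2 := by field_simp
      linarith
    have := ENNReal.toReal_eq_zero_iff (ν S0)
    rw [this] at hzero
    rcases hzero with h | h
    · exact h
    · exact absurd h (measure_ne_top ν _)
  have I0 : (∫ y in S0, ‖ψ y‖ ∂ν) = 0 := by
    rw [Measure.restrict_eq_zero.mpr hS0null, integral_zero_measure]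
  -- bound on S1
  have I1 : (∫ y in S1, ‖ψ y‖ ∂ν) ≤ A * L * (ν Set.univ).toReal := by
    have step : (∫ y in S1, ‖ψ y‖ ∂ν) ≤ ∫ _ in S1, (A * L) ∂ν := by
      apply setIntegral_mono_on hφint.integrableOn (integrable_const _).integrableOn hS1m
      intro y hy
      have hy1 : 1 ≤ |g y| := hy
      have hgy : g y ≠ 0 := by
        intro h; rw [h, abs_zero] at hy1; linarith
      calc ‖ψ y‖ ≤ A * L * |g y| ^ (-δ) := hbound y hgy
        _ ≤ A * L * 1 := by
            apply mul_le_mul_of_nonneg_left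
              (Real.rpow_le_one_of_one_le_of_nonpos hy1 (by linarith))
              (by positivity)
        _ = A * L := mul_one _
    calc (∫ y in S1, ‖ψ y‖ ∂ν) ≤ ∫ _ in S1, (A * L) ∂ν := step
      _ = (ν S1).toReal * (A * L) := by rw [setIntegral_const, smul_eq_mul]; rfl
      _ ≤ (ν Set.univ).toReal * (A * L) := by
          apply mul_le_mul_of_nonneg_right
            (ENNReal.toReal_mono (measure_ne_top ν _) (measure_mono (Set.subset_univ _)))
            (by positivity)
      _ = A * L * (ν Set.univ).toReal := by ring
  -- bound on U
  have hpowrw : ∀ n : ℕ, ((2:ℝ)⁻¹ ^ n : ℝ) = (2:ℝ) ^ (-(n:ℝ)) := by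
    intro n
    rw [inv_pow, ← Real.rpow_natCast 2 n, ← Real.rpow_neg (by norm_num)]
  have hterm : ∀ k : ℕ, ((2:ℝ)⁻¹ ^ (k+1) : ℝ) ^ (-δ) * ((2:ℝ)⁻¹ ^ k : ℝ) ^ (δ') =
      (2:ℝ) ^ (δ:ℝ) * r ^ k := by
    intro k
    rw [hpowrw, hpowrw, ← Real.rpow_natCast r k, hrdef,
      ← Real.rpow_mul (by norm_num : (0:ℝ) ≤ 2), ← Real.rpow_mul (by norm_num : (0:ℝ) ≤ 2),
      ← Real.rpow_mul (by norm_num : (0:ℝ) ≤ 2), ← Real.rpow_add (by norm_num : (0:ℝ) < 2),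
      ← Real.rpow_add (by norm_num : (0:ℝ) < 2)]
    congr 1; push_cast; ring
  have hsum : HasSum (fun k => ∫ y in E k, ‖ψ y‖ ∂ν) (∫ y in U, ‖ψ y‖ ∂ν) :=
    hasSum_integral_iUnion hEm hdE hφint.integrableOn
  set D : ℝ := A * L * c2 * B * (2:ℝ) ^ (δ:ℝ) with hD
  have hD0 : 0 ≤ D := by positivity
  have htermle : ∀ k : ℕ, (∫ y in E k, ‖ψ y‖ ∂ν) ≤ D * r ^ k := by
    intro k
    have hc : (0:ℝ) ≤ A * L * ((2:ℝ)⁻¹ ^ (k+1) : ℝ) ^ (-δ) := by positivity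
    have step : (∫ y in E k, ‖ψ y‖ ∂ν) ≤ ∫ _ in E k, (A * L * ((2:ℝ)⁻¹ ^ (k+1) : ℝ) ^ (-δ)) ∂ν := by
      apply setIntegral_mono_on hφint.integrableOn (integrable_const _).integrableOn (hEm k)
      intro y hy
      have hy1 : ((2:ℝ)⁻¹) ^ (k+1) ≤ |g y| := hy.1
      have hgy : g y ≠ 0 := by
        intro h
        rw [h, abs_zero] at hy1
        linarith [hpow_pos (k+1)]
      calc ‖ψ y‖ ≤ A * L * |g y| ^ (-δ) := hbound y hgy
        _ ≤ A * L * ((2:ℝ)⁻¹ ^ (k+1) : ℝ) ^ (-δ) := by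
            apply mul_le_mul_of_nonneg_left
              (Real.rpow_le_rpow_of_nonpos (hpow_pos (k+1)) hy1 (by linarith))
              (by positivity)
    have hsubk : E k ⊆ {y | |g y| ≤ ((2:ℝ)⁻¹) ^ k} := fun y hy => le_of_lt hy.2
    have hmeask : (ν (E k)).toReal ≤ c2 * B * (((2:ℝ)⁻¹ ^ k : ℝ)) ^ δ' := by
      calc (ν (E k)).toReal ≤ (ν {y | |g y| ≤ ((2:ℝ)⁻¹) ^ k}).toReal :=
            ENNReal.toReal_mono (measure_ne_top ν _) (measure_mono hsubk)
        _ ≤ 5 / (1 - δ') * B * (((2:ℝ)⁻¹ ^ k : ℝ)) ^ δ' :=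
            dist_bound ν hg hB hδ'0 hδ'1 hypg (hpow_pos k)
        _ = c2 * B * (((2:ℝ)⁻¹ ^ k : ℝ)) ^ δ' := by rw [hc2]
    calc (∫ y in E k, ‖ψ y‖ ∂ν) ≤ ∫ _ in E k, (A * L * ((2:ℝ)⁻¹ ^ (k+1) : ℝ) ^ (-δ)) ∂ν := step
      _ = (ν (E k)).toReal * (A * L * ((2:ℝ)⁻¹ ^ (k+1) : ℝ) ^ (-δ)) := by
          rw [setIntegral_const, smul_eq_mul]; rfl
      _ ≤ (c2 * B * (((2:ℝ)⁻¹ ^ k : ℝ)) ^ δ') * (A * L * ((2:ℝ)⁻¹ ^ (k+1) : ℝ) ^ (-δ)) :=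
          mul_le_mul_of_nonneg_right hmeask hc
      _ = (A * L * c2 * B) * (((2:ℝ)⁻¹ ^ (k+1) : ℝ) ^ (-δ) * ((2:ℝ)⁻¹ ^ k : ℝ) ^ (δ')) := by ring
      _ = D * r ^ k := by rw [hterm k, hD]; ring
  have hsummable : Summable (fun k : ℕ => D * r ^ k) :=
    (summable_geometric_of_lt_one hr0.le hr1).mul_left D
  have IU : (∫ y in U, ‖ψ y‖ ∂ν) ≤ A * L * (c3 * B) := by
    have h1 : (∫ y in U, ‖ψ y‖ ∂ν) ≤ ∑' k, D * r ^ k := by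
      rw [← hsum.tsum_eq]
      exact Summable.tsum_le_tsum htermle hsum.summable hsummable
    have h2 : (∑' k : ℕ, D * r ^ k) = D * (1 - r)⁻¹ := by
      rw [tsum_mul_left, tsum_geometric_of_lt_one hr0.le hr1]
    rw [h2] at h1
    calc (∫ y in U, ‖ψ y‖ ∂ν) ≤ D * (1 - r)⁻¹ := h1
      _ = A * L * (c3 * B) := by
          rw [hD, hc3]
          field_simp
  -- assemble
  have hsplit : (∫ y, ‖ψ y‖ ∂ν)
      = (∫ y in S0, ‖ψ y‖ ∂ν) + ((∫ y in S1, ‖ψ y‖ ∂ν) + ∫ y in U, ‖ψ y‖ ∂ν) := by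
    conv_lhs => rw [← setIntegral_univ (f := fun y => ‖ψ y‖) (μ := ν), hcover]
    rw [setIntegral_union hd01 (hS1m.union hUm) hφint.integrableOn hφint.integrableOn,
      setIntegral_union hd1U hUm hφint.integrableOn hφint.integrableOn]
  have hnorm : ‖∫ z, Fz z ∂(μ.prod ν)‖ ≤ ∫ y, ‖ψ y‖ ∂ν := by
    rw [hfub]
    exact norm_integral_le_integral_norm _
  have hνY : (0:ℝ) ≤ (ν Set.univ).toReal := ENNReal.toReal_nonneg
  have hfinal : (∫ y, ‖ψ y‖ ∂ν) ≤ (1 + c3) * A * ((ν Set.univ).toReal + B) * L := by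
    rw [hsplit, I0, zero_add]
    have := add_le_add I1 IU
    apply le_trans this
    nlinarith [mul_nonneg (mul_nonneg (mul_nonneg hA.le hL) hc3pos.le) hνY,
      mul_nonneg (mul_nonneg hA.le hL) hB.le]
  calc ‖∫ z, Fz z ∂(μ.prod ν)‖ ≤ ∫ y, ‖ψ y‖ ∂ν := hnorm
    _ ≤ (1 + c3) * A * ((ν Set.univ).toReal + B) * L := hfinal
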